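/- If f(z) = z + a₂z² + a₃z³ + ⋯ is starlike of order α with 3/4 ≤ α ≤ 1, then |a₂a₄ - a₃²| ≤ (1 - α)²[13 - 16(1 - α)²]/12. -/

import Mathlib

open Metric Filter Complex Set Topology

noncomputable def Sfun (c : ℕ → ℂ) (z : ℂ) : ℂ := ∑' n, c n * z ^ n

def OKseq (c : ℕ → ℂ) : Prop := ∀ z ∈ ball (0 : ℂ) 1, Summable (fun n => c n * z ^ n)

lemma mem_ball_norm {z : ℂ} (hz : z ∈ ball (0:ℂ) 1) : ‖z‖ < 1 := by
  simpa [mem_ball, dist_eq_norm] using hz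

lemma norm_mem_ball {z : ℂ} (hz : ‖z‖ < 1) : z ∈ ball (0:ℂ) 1 := by
  simpa [mem_ball, dist_eq_norm] using hz

lemma summable_aux {q : ℝ} (hq0 : 0 ≤ q) (hq1 : q < 1) :
    Summable (fun n : ℕ => ((n : ℝ) + 2) * q ^ n) := by
  have h1 : Summable (fun n : ℕ => (n:ℝ) ^ 1 * q ^ n) :=
    summable_pow_mul_geometric_of_norm_lt_one 1 (by rwa [Real.norm_eq_abs, _root_.abs_of_nonneg hq0])
  have h2 : Summable (fun n : ℕ => q ^ n) := summable_geometric_of_lt_one hq0 hq1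
  exact ((h1.add (h2.add h2)).congr (fun n => by ring))

lemma OKseq.bound {c : ℕ → ℂ} (hc : OKseq c) {r : ℝ} (hr0 : 0 ≤ r) (hr1 : r < 1) :
    ∃ C : ℝ, 0 ≤ C ∧ ∀ n, ‖c n‖ * r ^ n ≤ C := by
  have hrb : (r : ℂ) ∈ ball (0:ℂ) 1 := by
    apply norm_mem_ball
    rwa [Complex.norm_real, Real.norm_eq_abs, _root_.abs_of_nonneg hr0]
  have hs := hc _ hrb
  obtain ⟨C, hC⟩ := hs.tendsto_atTop_zero.norm.bddAbove_range
  refine ⟨max C 0, le_max_right _ _, fun n => ?_⟩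
  have h := hC (Set.mem_range_self (f := fun n => ‖c n * (r:ℂ) ^ n‖) n)
  have hn : ‖c n * (r:ℂ) ^ n‖ = ‖c n‖ * r ^ n := by
    rw [norm_mul, norm_pow, Complex.norm_real, Real.norm_eq_abs, _root_.abs_of_nonneg hr0]
  rw [hn] at h
  exact h.trans (le_max_left _ _)

lemma OKseq.shift {c : ℕ → ℂ} (hc : OKseq c) : OKseq (fun n => c (n + 1)) := by
  intro z hz
  rcases eq_or_ne z 0 with rfl | hz0
  · refine summable_of_ne_finset_zero (s := {0}) fun n hn => ?_
    have : n ≠ 0 := by simpa using hn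
    simp [zero_pow this]
  · have h1 : Summable (fun n => c (n + 1) * z ^ (n + 1)) :=
      (summable_nat_add_iff (f := fun n => c n * z ^ n) 1).2 (hc z hz)
    refine (h1.mul_left z⁻¹).congr fun n => ?_
    field_simp [pow_succ]
    ring

lemma OKseq.weight {c : ℕ → ℂ} (hc : OKseq c) (w : ℕ → ℂ)
    (hw : ∀ n, ‖w n‖ ≤ (n : ℝ) + 2) : OKseq (fun n => w n * c n) := by
  intro z hz
  have hz1 : ‖z‖ < 1 := mem_ball_norm hz
  have hz0 : 0 ≤ ‖z‖ := norm_nonneg z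
  obtain ⟨r, hzr, hr1⟩ : ∃ r, ‖z‖ < r ∧ r < 1 := ⟨(‖z‖ + 1) / 2, by linarith, by linarith⟩
  have hr0 : 0 < r := lt_of_le_of_lt hz0 hzr
  obtain ⟨C, hC0, hC⟩ := hc.bound hr0.le hr1
  have hq : ‖z‖ / r < 1 := (div_lt_one hr0).2 hzr
  have hq0 : 0 ≤ ‖z‖ / r := by positivity
  have hsum := (summable_aux hq0 hq).mul_left C
  apply Summable.of_norm_bounded hsum
  intro n
  have h2 : ‖c n‖ ≤ C / r ^ n := by
    rw [le_div_iff₀ (by positivity)]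
    exact hC n
  calc ‖w n * c n * z ^ n‖ = ‖w n‖ * ‖c n‖ * ‖z‖ ^ n := by
        rw [norm_mul, norm_mul, norm_pow]
    _ ≤ ((n:ℝ) + 2) * (C / r ^ n) * ‖z‖ ^ n := by
        have hn2 : (0:ℝ) ≤ (n:ℝ) + 2 := by positivity
        apply mul_le_mul_of_nonneg_right _ (by positivity)
        exact mul_le_mul (hw n) h2 (norm_nonneg _) hn2
    _ = C * (((n:ℝ) + 2) * (‖z‖ / r) ^ n) := by
        rw [div_pow]
        field_simp

lemma Sfun_zero {c : ℕ → ℂ} : Sfun c 0 = c 0 := by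
  unfold Sfun
  rw [tsum_eq_single 0]
  · simp
  · intro n hn
    simp [zero_pow hn]

lemma OKseq.hasDerivAt {c : ℕ → ℂ} (hc : OKseq c) {z : ℂ} (hz : z ∈ ball (0:ℂ) 1) :
    HasDerivAt (Sfun c) (Sfun (fun n => (n + 1 : ℂ) * c (n + 1)) z) z := by
  have hz1 : ‖z‖ < 1 := mem_ball_norm hz
  have hz0 : 0 ≤ ‖z‖ := norm_nonneg z
  obtain ⟨r, hzr, hr1⟩ : ∃ r, ‖z‖ < r ∧ r < 1 := ⟨(‖z‖ + 1) / 2, by linarith, by linarith⟩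
  have hr0 : 0 < r := lt_of_le_of_lt hz0 hzr
  obtain ⟨r', hrr', hr'1⟩ : ∃ r', r < r' ∧ r' < 1 := ⟨(r + 1) / 2, by linarith, by linarith⟩
  have hr'0 : 0 < r' := hr0.trans hrr'
  obtain ⟨C, hC0, hC⟩ := hc.bound hr'0.le hr'1
  set u : ℕ → ℝ := fun n => (C / r) * (((n : ℝ) + 2) * (r / r') ^ n) with hu
  have hq0 : 0 ≤ r / r' := by positivity
  have hq1 : r / r' < 1 := (div_lt_one hr'0).2 hrr'
  have husum : Summable u := (summable_aux hq0 hq1).mul_left (C / r)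
  have hbound : ∀ (n : ℕ), ∀ y : ℂ, y ∈ ball (0:ℂ) r →
      ‖c n * ((n : ℂ) * y ^ (n - 1))‖ ≤ u n := by
    intro n y hy
    have hyr : ‖y‖ < r := by simpa [mem_ball, dist_eq_norm] using hy
    have hy0 : 0 ≤ ‖y‖ := norm_nonneg y
    have hcn : ‖c n‖ ≤ C / r' ^ n := by
      rw [le_div_iff₀ (by positivity)]; exact hC n
    rcases Nat.eq_zero_or_pos n with rfl | hn
    · simp [hu]; positivity
    calc ‖c n * ((n : ℂ) * y ^ (n - 1))‖ = ‖c n‖ * ((n : ℝ) * ‖y‖ ^ (n - 1)) := by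
          rw [norm_mul, norm_mul, norm_pow, Complex.norm_natCast]
      _ ≤ (C / r' ^ n) * ((n : ℝ) * r ^ (n - 1)) := by
          apply mul_le_mul hcn _ (by positivity) (by positivity)
          exact mul_le_mul_of_nonneg_left (pow_le_pow_left₀ hy0 hyr.le _) (Nat.cast_nonneg n)
      _ = (C / r) * ((n : ℝ) * (r / r') ^ n) := by
          have hrpow : r ^ (n - 1) = r ^ n / r := by
            rw [eq_div_iff hr0.ne', ← pow_succ]
            congr 1
            omega
          rw [hrpow, div_pow]
          rw [div_mul_eq_mul_div, div_mul_eq_mul_div, mul_div_assoc, mul_div_assoc]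
          rw [div_div]
          ring_nf
      _ ≤ u n := by
          rw [hu]
          have : (n : ℝ) ≤ (n : ℝ) + 2 := by linarith
          apply mul_le_mul_of_nonneg_left _ (by positivity)
          apply mul_le_mul_of_nonneg_right this (by positivity)
  have hzr' : z ∈ ball (0:ℂ) r := by simpa [mem_ball, dist_eq_norm] using hzr
  have h0r : (0:ℂ) ∈ ball (0:ℂ) r := by simpa [mem_ball] using hr0
  have hg : ∀ (n : ℕ), ∀ y : ℂ, y ∈ ball (0:ℂ) r →
      HasDerivAt (fun w => c n * w ^ n) (c n * ((n : ℂ) * y ^ (n - 1))) y := by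
    intro n y _
    exact (hasDerivAt_pow n y).const_mul (c n)
  have hkey : HasDerivAt (fun w => ∑' n, c n * w ^ n) (∑' n, c n * ((n : ℂ) * z ^ (n - 1))) z :=
    hasDerivAt_tsum_of_isPreconnected husum isOpen_ball (convex_ball _ _).isPreconnected
      hg hbound h0r (by simpa using hc 0 (norm_mem_ball (by simp))) hzr'
  have hsum2 : Summable (fun n => c n * ((n : ℂ) * z ^ (n - 1))) :=
    Summable.of_norm_bounded husum (fun n => hbound n z hzr')
  have heq : (∑' n, c n * ((n : ℂ) * z ^ (n - 1))) = Sfun (fun n => (n + 1 : ℂ) * c (n + 1)) z := by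
    rw [Summable.tsum_eq_zero_add hsum2]
    unfold Sfun
    simp only [Nat.cast_zero, Nat.add_sub_cancel, Nat.cast_add, Nat.cast_one]
    rw [zero_mul, mul_zero, zero_add]
    exact tsum_congr fun n => by ring
  rw [heq] at hkey
  exact hkey

lemma OKseq.differentiableOn {c : ℕ → ℂ} (hc : OKseq c) :
    DifferentiableOn ℂ (Sfun c) (ball (0:ℂ) 1) := fun z hz =>
  ((hc.hasDerivAt hz).differentiableAt).differentiableWithinAt

lemma OKseq.continuousAt {c : ℕ → ℂ} (hc : OKseq c) {z : ℂ} (hz : z ∈ ball (0:ℂ) 1) :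
    ContinuousAt (Sfun c) z := (hc.hasDerivAt hz).differentiableAt.continuousAt

lemma OKseq.deriv_zero {c : ℕ → ℂ} (hc : OKseq c) : deriv (Sfun c) 0 = c 1 := by
  have h := (hc.hasDerivAt (z := 0) (mem_ball_self one_pos)).deriv
  rw [h, Sfun_zero]
  norm_num

lemma Sfun_expand {c : ℕ → ℂ} (hc : OKseq c) {z : ℂ} (hz : z ∈ ball (0:ℂ) 1) :
    Sfun c z = c 0 + z * Sfun (fun n => c (n + 1)) z := by
  unfold Sfun
  rw [Summable.tsum_eq_zero_add (hc z hz)]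
  congr 1
  · simp
  · rw [← tsum_mul_left]
    exact tsum_congr fun n => by ring

lemma dslope0 (F : ℂ → ℂ) {z : ℂ} (hz : z ≠ 0) : dslope F 0 z = (F z - F 0) / z := by
  rw [dslope_of_ne _ hz, slope_def_field]
  simp

lemma ext0 {F G : ℂ → ℂ} (hF : ContinuousAt F 0) (hG : ContinuousAt G 0)
    (h : ∀ z ∈ ball (0:ℂ) 1, z ≠ 0 → F z = G z) : F 0 = G 0 := by
  have h1 : Filter.Tendsto F (𝓝[≠] (0:ℂ)) (𝓝 (F 0)) := hF.tendsto.mono_left nhdsWithin_le_nhds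
  have h2 : Filter.Tendsto G (𝓝[≠] (0:ℂ)) (𝓝 (G 0)) := hG.tendsto.mono_left nhdsWithin_le_nhds
  have he : F =ᶠ[𝓝[≠] (0:ℂ)] G := by
    filter_upwards [self_mem_nhdsWithin,
      mem_nhdsWithin_of_mem_nhds (ball_mem_nhds (0:ℂ) one_pos)] with z hz1 hz2
    exact h z hz2 hz1
  exact tendsto_nhds_unique (h1.congr' he) h2

lemma schwarz' {F : ℂ → ℂ} (hd : DifferentiableOn ℂ F (ball (0:ℂ) 1)) (h0 : F 0 = 0)
    (hb : ∀ z ∈ ball (0:ℂ) 1, ‖F z‖ ≤ 1) : ∀ z ∈ ball (0:ℂ) 1, ‖dslope F 0 z‖ ≤ 1 := by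
  intro z hz
  have key : ∀ ε : ℝ, 0 < ε → ‖dslope F 0 z‖ ≤ 1 + ε := by
    intro ε hε
    have hmaps : Set.MapsTo F (ball (0:ℂ) 1) (ball (F 0) (1 + ε)) := by
      intro w hw
      rw [h0, mem_ball, dist_eq_norm, sub_zero]
      exact lt_of_le_of_lt (hb w hw) (by linarith)
    have := Complex.norm_dslope_le_div_of_mapsTo_ball hd (hmaps.mono_right ball_subset_closedBall) hz
    simpa using this
  exact le_of_forall_pos_le_add key

lemma mob_den_ne {u a : ℂ} (hu : ‖u‖ ≤ 1) (ha : ‖a‖ < 1) : 1 - (starRingEnd ℂ) a * u ≠ 0 := by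
  intro h
  have h1 : (starRingEnd ℂ) a * u = 1 := by linear_combination -h
  have h2 : ‖(starRingEnd ℂ) a * u‖ < 1 := by
    rw [norm_mul, RCLike.norm_conj]
    calc ‖a‖ * ‖u‖ ≤ ‖a‖ * 1 := by
          exact mul_le_mul_of_nonneg_left hu (norm_nonneg a)
      _ < 1 := by simpa using ha
  rw [h1] at h2
  simp at h2

lemma mob_norm {u a : ℂ} (hu : ‖u‖ ≤ 1) (ha : ‖a‖ < 1) :
    ‖(u - a) / (1 - (starRingEnd ℂ) a * u)‖ ≤ 1 := by
  have hden := mob_den_ne hu ha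
  rw [norm_div, div_le_one (norm_pos_iff.2 hden)]
  have hkey : Complex.normSq (1 - (starRingEnd ℂ) a * u) - Complex.normSq (u - a)
      = (1 - Complex.normSq a) * (1 - Complex.normSq u) := by
    simp only [Complex.normSq_apply, Complex.sub_re, Complex.sub_im, Complex.mul_re,
      Complex.mul_im, Complex.conj_re, Complex.conj_im, Complex.one_re, Complex.one_im]
    ring
  have hna : Complex.normSq a < 1 := by
    rw [← Complex.sq_norm]
    nlinarith [norm_nonneg a, ha]
  have hnu : Complex.normSq u ≤ 1 := by
    rw [← Complex.sq_norm]
    nlinarith [norm_nonneg u, hu]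
  have h2 : Complex.normSq (u - a) ≤ Complex.normSq (1 - (starRingEnd ℂ) a * u) := by nlinarith
  rw [Complex.norm_def, Complex.norm_def]
  exact Real.sqrt_le_sqrt h2

lemma const_of_max {F : ℂ → ℂ} (hd : DifferentiableOn ℂ F (ball (0:ℂ) 1))
    (hb : ∀ z ∈ ball (0:ℂ) 1, ‖F z‖ ≤ ‖F 0‖) : Set.EqOn F (fun _ => F 0) (ball (0:ℂ) 1) := by
  have := Complex.eqOn_of_isPreconnected_of_isMaxOn_norm (convex_ball (0:ℂ) 1).isPreconnected
    isOpen_ball hd (mem_ball_self one_pos) (fun z hz => hb z hz)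
  exact this

lemma SP3 {g : ℂ → ℂ} (hd : DifferentiableOn ℂ g (ball (0:ℂ) 1))
    (hb : ∀ z ∈ ball (0:ℂ) 1, ‖g z‖ ≤ 1) :
    ‖dslope g 0 0‖ ≤ 1 - ‖g 0‖ ^ 2 ∧
    ‖((1 - ‖g 0‖ ^ 2 : ℝ) : ℂ) * dslope (dslope g 0) 0 0
        + (starRingEnd ℂ) (g 0) * (dslope g 0 0) ^ 2‖
      ≤ (1 - ‖g 0‖ ^ 2) ^ 2 - ‖dslope g 0 0‖ ^ 2 ∧
    (‖g 0‖ = 1 → dslope g 0 0 = 0 ∧ dslope (dslope g 0) 0 0 = 0) := by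
  have hball : ball (0:ℂ) 1 ∈ 𝓝 (0:ℂ) := ball_mem_nhds (0:ℂ) one_pos
  have h0m : (0:ℂ) ∈ ball (0:ℂ) 1 := mem_ball_self one_pos
  set G2 : ℂ → ℂ := dslope g 0 with hG2def
  set G3 : ℂ → ℂ := dslope G2 0 with hG3def
  have hdG2 : DifferentiableOn ℂ G2 (ball (0:ℂ) 1) :=
    (Complex.differentiableOn_dslope hball).2 hd
  have hdG3 : DifferentiableOn ℂ G3 (ball (0:ℂ) 1) :=
    (Complex.differentiableOn_dslope hball).2 hdG2
  have hw1le : ‖g 0‖ ≤ 1 := hb 0 h0m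
  have hgz : ∀ z ∈ ball (0:ℂ) 1, z ≠ 0 → g z = g 0 + z * G2 z := by
    intro z _ hz0
    rw [hG2def, dslope0 _ hz0]
    field_simp
    ring
  rcases eq_or_lt_of_le hw1le with hw1 | hw1
  · -- constant case : ‖g 0‖ = 1
    have hw1' : ‖g 0‖ = 1 := hw1
    have hcon : Set.EqOn g (fun _ => g 0) (ball (0:ℂ) 1) :=
      const_of_max hd (fun z hz => by rw [hw1']; exact hb z hz)
    have hw2 : G2 0 = 0 := by
      rw [hG2def, dslope_same]
      rw [(hcon.eventuallyEq_of_mem hball).deriv_eq]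
      simp
    have hG2all : ∀ z ∈ ball (0:ℂ) 1, G2 z = 0 := by
      intro z hz
      rcases eq_or_ne z 0 with rfl | hz0
      · exact hw2
      · rw [hG2def, dslope0 _ hz0, hcon hz]
        simp
    have hw3 : G3 0 = 0 := by
      have hcon2 : Set.EqOn G2 (fun _ => (0:ℂ)) (ball (0:ℂ) 1) := fun z hz => hG2all z hz
      rw [hG3def, dslope_same]
      rw [(hcon2.eventuallyEq_of_mem hball).deriv_eq]
      simp
    refine ⟨?_, ?_, fun _ => ⟨hw2, hw3⟩⟩
    · simp [hw2, hw1']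
    · simp [hw2, hw3, hw1']
  · -- nonconstant case : ‖g 0‖ < 1
    set τ : ℝ := 1 - ‖g 0‖ ^ 2 with hτdef
    have hτ : 0 < τ := by
      have := norm_nonneg (g 0)
      nlinarith
    have hτc : ((τ : ℝ) : ℂ) = 1 - (starRingEnd ℂ) (g 0) * g 0 := by
      rw [hτdef]
      push_cast
      rw [mul_comm, Complex.mul_conj]
      norm_cast
      rw [Complex.normSq_eq_norm_sq]
    set m1 : ℂ → ℂ := fun z => (g z - g 0) / (1 - (starRingEnd ℂ) (g 0) * g z) with hm1def
    have hden : ∀ z ∈ ball (0:ℂ) 1, 1 - (starRingEnd ℂ) (g 0) * g z ≠ 0 :=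
      fun z hz => mob_den_ne (hb z hz) hw1
    have hdm1 : DifferentiableOn ℂ m1 (ball (0:ℂ) 1) := by
      apply DifferentiableOn.div
      · exact hd.sub (differentiableOn_const _)
      · exact (differentiableOn_const _).sub ((differentiableOn_const _).mul hd)
      · exact hden
    have hm10 : m1 0 = 0 := by simp [hm1def]
    have hm1b : ∀ z ∈ ball (0:ℂ) 1, ‖m1 z‖ ≤ 1 := fun z hz => mob_norm (hb z hz) hw1
    set A1 : ℂ → ℂ := dslope m1 0 with hA1def
    have hA1b : ∀ z ∈ ball (0:ℂ) 1, ‖A1 z‖ ≤ 1 := schwarz' hdm1 hm10 hm1b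
    have hdA1 : DifferentiableOn ℂ A1 (ball (0:ℂ) 1) :=
      (Complex.differentiableOn_dslope hball).2 hdm1
    set A2 : ℂ → ℂ := dslope A1 0 with hA2def
    have hdA2 : DifferentiableOn ℂ A2 (ball (0:ℂ) 1) :=
      (Complex.differentiableOn_dslope hball).2 hdA1
    have contAt : ∀ (F : ℂ → ℂ), DifferentiableOn ℂ F (ball (0:ℂ) 1) → ContinuousAt F 0 :=
      fun F hF => ((hF 0 h0m).differentiableAt hball).continuousAt
    -- identity IA1
    have IA1ne : ∀ z ∈ ball (0:ℂ) 1, z ≠ 0 →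
        A1 z * (1 - (starRingEnd ℂ) (g 0) * g z) = G2 z := by
      intro z hz hz0
      rw [hA1def, dslope0 _ hz0, hG2def, dslope0 _ hz0, hm10, hm1def]
      show ((g z - g 0) / (1 - (starRingEnd ℂ) (g 0) * g z) - 0) / z * (1 - (starRingEnd ℂ) (g 0) * g z) = (g z - g 0) / z
      rw [sub_zero, div_mul_eq_mul_div, div_mul_cancel₀ _ (hden z hz)]
    have IA1 : ∀ z ∈ ball (0:ℂ) 1, A1 z * (1 - (starRingEnd ℂ) (g 0) * g z) = G2 z := by
      intro z hz
      rcases eq_or_ne z 0 with rfl | hz0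
      · exact ext0 (ContinuousAt.mul (contAt A1 hdA1)
          ((continuousAt_const).sub ((continuousAt_const).mul (contAt g hd))))
          (contAt G2 hdG2) IA1ne
      · exact IA1ne z hz hz0
    have he1 : ((τ:ℝ):ℂ) * A1 0 = G2 0 := by
      rw [hτc]
      have := IA1 0 h0m
      linear_combination this
    have hnormτ : ‖((τ:ℝ):ℂ)‖ = τ := by
      rw [Complex.norm_real, Real.norm_eq_abs, _root_.abs_of_pos hτ]
    have hw2τ : ‖G2 0‖ = τ * ‖A1 0‖ := by
      rw [← he1, norm_mul, hnormτ]
    have goal1 : ‖G2 0‖ ≤ 1 - ‖g 0‖ ^ 2 := by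
      rw [hw2τ, ← hτdef]
      calc τ * ‖A1 0‖ ≤ τ * 1 := mul_le_mul_of_nonneg_left (hA1b 0 h0m) hτ.le
        _ = τ := mul_one τ
    -- identity IA2
    have IA2ne : ∀ z ∈ ball (0:ℂ) 1, z ≠ 0 →
        ((τ:ℝ):ℂ) * A2 z = G3 z + (starRingEnd ℂ) (g 0) * A1 z * G2 z := by
      intro z hz hz0
      have h1 := IA1 z hz
      have h2 := hgz z hz hz0
      have h3 := he1
      have e1 : ((τ:ℝ):ℂ) * A1 z = G2 z + (starRingEnd ℂ) (g 0) * (z * (A1 z * G2 z)) := by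
        rw [hτc]
        linear_combination h1 + (starRingEnd ℂ) (g 0) * A1 z * h2
      have D : ((τ:ℝ):ℂ) * (A1 z - A1 0)
          = (G2 z - G2 0) + z * ((starRingEnd ℂ) (g 0) * A1 z * G2 z) := by
        linear_combination e1 - h3
      rw [hA2def, dslope0 _ hz0, hG3def, dslope0 _ hz0]
      field_simp
      linear_combination D
    have IA2 : ((τ:ℝ):ℂ) * A2 0 = G3 0 + (starRingEnd ℂ) (g 0) * A1 0 * G2 0 := by
      refine ext0 (F := fun z => ((τ:ℝ):ℂ) * A2 z)
        (G := fun z => G3 z + (starRingEnd ℂ) (g 0) * A1 z * G2 z) ?_ ?_ IA2ne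
      · exact (continuousAt_const).mul (contAt A2 hdA2)
      · exact (contAt G3 hdG3).add
          (((continuousAt_const).mul (contAt A1 hdA1)).mul (contAt G2 hdG2))
    have hA10le : ‖A1 0‖ ≤ 1 := hA1b 0 h0m
    rcases eq_or_lt_of_le hA10le with he1eq | he1lt
    · -- A1 is constant of norm one
      have he1' : ‖A1 0‖ = 1 := he1eq
      have hconA : Set.EqOn A1 (fun _ => A1 0) (ball (0:ℂ) 1) :=
        const_of_max hdA1 (fun z hz => by rw [he1']; exact hA1b z hz)
      have he2 : A2 0 = 0 := by
        rw [hA2def, dslope_same]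
        rw [(hconA.eventuallyEq_of_mem hball).deriv_eq]
        simp
      have hzero : G3 0 + (starRingEnd ℂ) (g 0) * A1 0 * G2 0 = 0 := by
        rw [← IA2, he2, mul_zero]
      have hw2n : ‖G2 0‖ = τ := by rw [hw2τ, he1', mul_one]
      refine ⟨goal1, ?_, fun h1 => absurd h1 (ne_of_lt hw1)⟩
      have hval : ((τ:ℝ):ℂ) * G3 0 + (starRingEnd ℂ) (g 0) * (G2 0) ^ 2 = 0 := by
        have hsq : (G2 0) ^ 2 = ((τ:ℝ):ℂ) * A1 0 * G2 0 := by
          rw [he1, sq]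
        rw [hsq]
        linear_combination ((τ:ℝ):ℂ) * hzero
      rw [hval]
      simp only [norm_zero]
      rw [hw2n]
      simp
    · -- second Möbius step
      set m2 : ℂ → ℂ := fun z => (A1 z - A1 0) / (1 - (starRingEnd ℂ) (A1 0) * A1 z) with hm2def
      have hden2 : ∀ z ∈ ball (0:ℂ) 1, 1 - (starRingEnd ℂ) (A1 0) * A1 z ≠ 0 :=
        fun z hz => mob_den_ne (hA1b z hz) he1lt
      have hdm2 : DifferentiableOn ℂ m2 (ball (0:ℂ) 1) := by
        apply DifferentiableOn.div
        · exact hdA1.sub (differentiableOn_const _)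
        · exact (differentiableOn_const _).sub ((differentiableOn_const _).mul hdA1)
        · exact hden2
      have hm20 : m2 0 = 0 := by simp [hm2def]
      have hm2b : ∀ z ∈ ball (0:ℂ) 1, ‖m2 z‖ ≤ 1 := fun z hz => mob_norm (hA1b z hz) he1lt
      set B1 : ℂ → ℂ := dslope m2 0 with hB1def
      have hB1b : ∀ z ∈ ball (0:ℂ) 1, ‖B1 z‖ ≤ 1 := schwarz' hdm2 hm20 hm2b
      have hdB1 : DifferentiableOn ℂ B1 (ball (0:ℂ) 1) :=
        (Complex.differentiableOn_dslope hball).2 hdm2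
      have IBne : ∀ z ∈ ball (0:ℂ) 1, z ≠ 0 →
          B1 z * (1 - (starRingEnd ℂ) (A1 0) * A1 z) = A2 z := by
        intro z hz hz0
        rw [hB1def, dslope0 _ hz0, hA2def, dslope0 _ hz0, hm20, hm2def]
        show ((A1 z - A1 0) / (1 - (starRingEnd ℂ) (A1 0) * A1 z) - 0) / z * (1 - (starRingEnd ℂ) (A1 0) * A1 z) = (A1 z - A1 0) / z
        rw [sub_zero, div_mul_eq_mul_div, div_mul_cancel₀ _ (hden2 z hz)]
      have IB : B1 0 * (1 - (starRingEnd ℂ) (A1 0) * A1 0) = A2 0 := by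
        refine ext0 (F := fun z => B1 z * (1 - (starRingEnd ℂ) (A1 0) * A1 z))
          (G := A2) ?_ (contAt A2 hdA2) IBne
        exact (contAt B1 hdB1).mul
          ((continuousAt_const).sub ((continuousAt_const).mul (contAt A1 hdA1)))
      have hσ : 1 - (starRingEnd ℂ) (A1 0) * A1 0 = (((1 - ‖A1 0‖^2 : ℝ)):ℂ) := by
        push_cast
        rw [mul_comm, Complex.mul_conj]
        norm_cast
        rw [Complex.normSq_eq_norm_sq]
      have he2norm : ‖A2 0‖ ≤ 1 - ‖A1 0‖ ^ 2 := by
        rw [← IB, norm_mul, hσ, Complex.norm_real, Real.norm_eq_abs]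
        have hσpos : (0:ℝ) ≤ 1 - ‖A1 0‖^2 := by nlinarith [norm_nonneg (A1 0)]
        rw [_root_.abs_of_nonneg hσpos]
        calc ‖B1 0‖ * (1 - ‖A1 0‖^2) ≤ 1 * (1 - ‖A1 0‖^2) :=
              mul_le_mul_of_nonneg_right (hB1b 0 h0m) hσpos
          _ = 1 - ‖A1 0‖^2 := one_mul _
      refine ⟨goal1, ?_, fun h1 => absurd h1 (ne_of_lt hw1)⟩
      have hval : ((τ:ℝ):ℂ) * G3 0 + (starRingEnd ℂ) (g 0) * (G2 0) ^ 2
          = ((τ:ℝ):ℂ)^2 * A2 0 := by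
        have hsq : (G2 0) ^ 2 = ((τ:ℝ):ℂ) * A1 0 * G2 0 := by rw [he1, sq]
        rw [hsq]
        linear_combination -(((τ:ℝ):ℂ) * IA2)
      rw [hval, norm_mul, norm_pow, hnormτ]
      have : τ^2 * ‖A2 0‖ ≤ τ^2 * (1 - ‖A1 0‖^2) := by
        apply mul_le_mul_of_nonneg_left he2norm (by positivity)
      refine le_trans this ?_
      have hw2exact : ‖G2 0‖ = τ * ‖A1 0‖ := hw2τ
      rw [hw2exact]
      apply le_of_eq
      ring

set_option maxHeartbeats 2000000 in
theorem stmt_10 (f : ℂ → ℂ) (a : ℕ → ℂ)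
    (hf : ∀ z ∈ Metric.ball (0 : ℂ) 1, HasSum (fun n => a n * z ^ n) (f z))
    (ha0 : a 0 = 0) (ha1 : a 1 = 1) (α : ℝ) (hα : 3 / 4 ≤ α) (hα' : α ≤ 1)
    (hstar : ∀ z ∈ Metric.ball (0 : ℂ) 1, z ≠ 0 → α < (z * deriv f z / f z).re) :
    ‖a 2 * a 4 - a 3 ^ 2‖ ≤ (1 - α) ^ 2 * (13 - 16 * (1 - α) ^ 2) / 12 := by
  have hball : ball (0:ℂ) 1 ∈ 𝓝 (0:ℂ) := ball_mem_nhds (0:ℂ) one_pos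
  have h0m : (0:ℂ) ∈ ball (0:ℂ) 1 := mem_ball_self one_pos
  set b : ℕ → ℂ := fun n => a (n + 1) with hbdef
  set ν : ℕ → ℂ := fun n => (n : ℂ) * a (n + 1) with hνdef
  have hOKa : OKseq a := fun z hz => (hf z hz).summable
  have hOKb : OKseq b := hOKa.shift
  have hOKν : OKseq ν := hOKb.weight (fun n => (n : ℂ))
    (fun n => by rw [Complex.norm_natCast]; linarith)
  set U : ℂ → ℂ := Sfun b with hUdef
  set P : ℂ → ℂ := Sfun ν with hPdef
  have hU0 : U 0 = 1 := by rw [hUdef, Sfun_zero]; exact ha1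
  have hP0 : P 0 = 0 := by rw [hPdef, Sfun_zero]; simp [hνdef]
  have hfz : ∀ z ∈ ball (0:ℂ) 1, f z = z * U z := by
    intro z hz
    rw [← (hf z hz).tsum_eq]
    have : (∑' n, a n * z ^ n) = Sfun a z := rfl
    rw [this, Sfun_expand hOKa hz, ha0, zero_add]
  have hderiv : ∀ z ∈ ball (0:ℂ) 1, deriv f z = P z + U z := by
    intro z hz
    have heq : f =ᶠ[𝓝 z] Sfun a := by
      filter_upwards [isOpen_ball.mem_nhds hz] with w hw
      exact ((hf w hw).tsum_eq).symm
    rw [heq.deriv_eq, (hOKa.hasDerivAt hz).deriv]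
    have h1 : Sfun (fun n => (n + 1 : ℂ) * a (n + 1)) z
        = ∑' (n : ℕ), (((n:ℂ) + 1) * a (n+1)) * z ^ n := rfl
    rw [h1, hPdef, hUdef]
    have h2 : ∀ n : ℕ, ((n:ℂ) + 1) * a (n+1) * z ^ n = ν n * z ^ n + b n * z ^ n := by
      intro n; rw [hνdef, hbdef]; ring
    rw [tsum_congr h2]
    exact Summable.tsum_add (hOKν z hz) (hOKb z hz)
  have hfne : ∀ z ∈ ball (0:ℂ) 1, z ≠ 0 → f z ≠ 0 := by
    intro z hz hz0 hF0
    have h := hstar z hz hz0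
    rw [hF0, div_zero] at h
    simp only [Complex.zero_re] at h
    linarith
  have hUne : ∀ z ∈ ball (0:ℂ) 1, U z ≠ 0 := by
    intro z hz
    rcases eq_or_ne z 0 with rfl | hz0
    · rw [hU0]; exact one_ne_zero
    · intro hU
      exact hfne z hz hz0 (by rw [hfz z hz, hU, mul_zero])
  have hkey : ∀ z ∈ ball (0:ℂ) 1, z ≠ 0 → α - 1 < (P z / U z).re := by
    intro z hz hz0
    have h := hstar z hz hz0
    have heq : z * deriv f z / f z = P z / U z + 1 := by
      rw [hderiv z hz, hfz z hz]
      field_simp [hUne z hz]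
    rw [heq, Complex.add_re, Complex.one_re] at h
    linarith
  rcases eq_or_lt_of_le hα' with hα1 | hα1
  · -- α = 1 : contradiction
    exfalso
    set q : ℂ → ℂ := fun z => P z / U z with hqdef
    have hq0 : q 0 = 0 := by rw [hqdef]; simp [hP0]
    have hdq : DifferentiableOn ℂ q (ball (0:ℂ) 1) := by
      rw [hqdef, hPdef, hUdef]
      exact (hOKν.differentiableOn).div (hOKb.differentiableOn) hUne
    have hqre : ∀ z ∈ ball (0:ℂ) 1, 0 ≤ (q z).re := by
      intro z hz
      rcases eq_or_ne z 0 with rfl | hz0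
      · rw [hq0]; simp
      · have := hkey z hz hz0; linarith [this]
    set E : ℂ → ℂ := fun z => Complex.exp (-q z) with hEdef
    have hdE : DifferentiableOn ℂ E (ball (0:ℂ) 1) := (hdq.neg).cexp
    have hE0 : ‖E 0‖ = 1 := by
      rw [hEdef]; simp [hq0]
    have hbE : ∀ z ∈ ball (0:ℂ) 1, ‖E z‖ ≤ ‖E 0‖ := by
      intro z hz
      rw [hE0, hEdef]
      simp only [Complex.norm_exp, Complex.neg_re]
      have h5 := Real.exp_le_exp.2 (show -(q z).re ≤ 0 by linarith [hqre z hz])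
      simpa using h5
    have hcon := const_of_max hdE hbE
    have hhalf : (1/2 : ℂ) ∈ ball (0:ℂ) 1 := by
      apply norm_mem_ball; norm_num
    have hEhalf : E (1/2) = E 0 := hcon hhalf
    have h1 : ‖E (1/2)‖ = 1 := by rw [hEhalf, hE0]
    have h2 : Real.exp (-(q (1/2)).re) = 1 := by
      rw [← h1, hEdef]
      simp [Complex.norm_exp]
    have h3 : (q (1/2)).re = 0 := by
      have he : Real.exp (-(q (1/2)).re) = Real.exp 0 := by rw [h2, Real.exp_zero]
      have := Real.exp_injective he
      linarith [this]
    have h3' : (P (1/2) / U (1/2)).re = 0 := h3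
    have h4 := hkey (1/2) hhalf (by norm_num)
    rw [h3'] at h4
    linarith
  · -- α < 1
    set A : ℂ := ((α : ℝ) : ℂ) with hAdef
    set δ : ℕ → ℂ := fun n => ((n : ℂ) + 2 - 2 * A) * a (n + 1) with hδdef
    have hOKδ : OKseq δ := by
      apply hOKb.weight
      intro n
      have hcast : ((n : ℂ) + 2 - 2 * A) = (((n : ℝ) + 2 - 2 * α : ℝ) : ℂ) := by
        rw [hAdef]; push_cast; ring
      rw [hcast, Complex.norm_real, Real.norm_eq_abs, _root_.abs_of_nonneg (by linarith [Nat.cast_nonneg (α := ℝ) n])]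
      linarith
    set Dn : ℂ → ℂ := Sfun δ with hDdef
    have hDval : ∀ z ∈ ball (0:ℂ) 1, Dn z = P z + (2 - 2 * A) * U z := by
      intro z hz
      rw [hDdef, hPdef, hUdef]
      have h2 : ∀ n : ℕ, δ n * z ^ n = ν n * z ^ n + (2 - 2*A) * (b n * z ^ n) := by
        intro n; rw [hδdef, hνdef, hbdef]; ring
      show Sfun δ z = _
      unfold Sfun
      rw [tsum_congr h2, Summable.tsum_add (hOKν z hz) ((hOKb z hz).mul_left _), tsum_mul_left]
    have hD0 : Dn 0 = 2 - 2 * A := by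
      rw [hDdef, Sfun_zero, hδdef]
      simp [ha1]
    have h2A : (2:ℂ) - 2 * A = (((2 - 2*α : ℝ)) : ℂ) := by rw [hAdef]; push_cast; ring
    have h2Ane : (2:ℂ) - 2 * A ≠ 0 := by
      rw [h2A]
      simp only [ne_eq, Complex.ofReal_eq_zero]
      intro h; linarith
    have hDne : ∀ z ∈ ball (0:ℂ) 1, Dn z ≠ 0 := by
      intro z hz
      rcases eq_or_ne z 0 with rfl | hz0
      · rw [hD0]; exact h2Ane
      · intro hD
        have hU := hUne z hz
        have hPU : P z / U z = -(2 - 2*A) := by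
          have : P z + (2 - 2*A) * U z = 0 := by rw [← hDval z hz]; exact hD
          field_simp
          linear_combination this
        have hre := hkey z hz hz0
        rw [hPU, h2A] at hre
        simp only [Complex.neg_re, Complex.ofReal_re] at hre
        linarith
    set ω : ℂ → ℂ := fun z => P z / Dn z with hωdef
    have hω0 : ω 0 = 0 := by rw [hωdef]; simp [hP0]
    have hdω : DifferentiableOn ℂ ω (ball (0:ℂ) 1) := by
      rw [hωdef, hPdef, hDdef]
      exact (hOKν.differentiableOn).div (hOKδ.differentiableOn) hDne
    have hωb : ∀ z ∈ ball (0:ℂ) 1, ‖ω z‖ ≤ 1 := by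
      intro z hz
      rcases eq_or_ne z 0 with rfl | hz0
      · rw [hω0]; simp
      · have hU := hUne z hz
        have hre := hkey z hz hz0
        have hPz : P z = (P z / U z) * U z := (div_mul_cancel₀ _ hU).symm
        have hDz : Dn z = ((P z / U z) + (2 - 2*A)) * U z := by
          rw [hDval z hz]
          field_simp
        rw [hωdef]
        show ‖P z / Dn z‖ ≤ 1
        rw [norm_div]
        apply div_le_one_of_le₀ _ (norm_nonneg _)
        rw [hPz, hDz, norm_mul, norm_mul]
        apply mul_le_mul_of_nonneg_right _ (norm_nonneg (U z))
        set p : ℂ := P z / U z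
        have hsq : Complex.normSq p ≤ Complex.normSq (p + (2 - 2*A)) := by
          rw [h2A]
          simp only [Complex.normSq_apply, Complex.add_re, Complex.add_im,
            Complex.ofReal_re, Complex.ofReal_im, add_zero]
          nlinarith [mul_pos (show (0:ℝ) < 2 - 2*α by linarith)
            (show (0:ℝ) < 2 * p.re + (2 - 2*α) by linarith)]
        rw [Complex.norm_def, Complex.norm_def]
        exact Real.sqrt_le_sqrt hsq
    -- the dslope tower of ω
    set g1 : ℂ → ℂ := dslope ω 0 with hg1def
    have hb1 : ∀ z ∈ ball (0:ℂ) 1, ‖g1 z‖ ≤ 1 := by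
      rw [hg1def]; exact schwarz' hdω hω0 hωb
    have hdg1 : DifferentiableOn ℂ g1 (ball (0:ℂ) 1) := by
      rw [hg1def]; exact (Complex.differentiableOn_dslope hball).2 hdω
    obtain ⟨S2, S3, Sdeg⟩ := SP3 hdg1 hb1
    set G2 : ℂ → ℂ := dslope g1 0 with hG2def
    set G3 : ℂ → ℂ := dslope G2 0 with hG3def
    have hdG2 : DifferentiableOn ℂ G2 (ball (0:ℂ) 1) := by
      rw [hG2def]; exact (Complex.differentiableOn_dslope hball).2 hdg1
    have hdG3 : DifferentiableOn ℂ G3 (ball (0:ℂ) 1) := by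
      rw [hG3def]; exact (Complex.differentiableOn_dslope hball).2 hdG2
    have contA : ∀ (F : ℂ → ℂ), DifferentiableOn ℂ F (ball (0:ℂ) 1) → ContinuousAt F 0 :=
      fun F hF => ((hF 0 h0m).differentiableAt hball).continuousAt
    have hωg1 : ∀ z ∈ ball (0:ℂ) 1, ω z = z * g1 z := by
      intro z hz
      rcases eq_or_ne z 0 with rfl | hz0
      · rw [hω0, zero_mul]
      · rw [hg1def, dslope0 _ hz0, hω0]
        field_simp
        ring
    have hPD : ∀ z ∈ ball (0:ℂ) 1, P z = Dn z * ω z := by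
      intro z hz
      rw [hωdef]
      field_simp [hDne z hz]
    set ν1 : ℕ → ℂ := fun n => ν (n+1) with hν1def
    set ν2 : ℕ → ℂ := fun n => ν1 (n+1) with hν2def
    set ν3 : ℕ → ℂ := fun n => ν2 (n+1) with hν3def
    set δ1 : ℕ → ℂ := fun n => δ (n+1) with hδ1def
    set δ2 : ℕ → ℂ := fun n => δ1 (n+1) with hδ2def
    have hOKν1 : OKseq ν1 := hOKν.shift
    have hOKν2 : OKseq ν2 := hOKν1.shift
    have hOKν3 : OKseq ν3 := hOKν2.shift
    have hOKδ1 : OKseq δ1 := hOKδ.shift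
    have hOKδ2 : OKseq δ2 := hOKδ1.shift
    have EP : ∀ z ∈ ball (0:ℂ) 1, P z = z * Sfun ν1 z := by
      intro z hz
      rw [hPdef]
      have h := Sfun_expand hOKν hz
      rw [h]
      have : ν 0 = 0 := by simp [hνdef]
      rw [this, zero_add]
    have EP2 : ∀ z ∈ ball (0:ℂ) 1, Sfun ν1 z = ν 1 + z * Sfun ν2 z := by
      intro z hz
      exact Sfun_expand hOKν1 hz
    have EP3 : ∀ z ∈ ball (0:ℂ) 1, Sfun ν2 z = ν 2 + z * Sfun ν3 z := by
      intro z hz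
      exact Sfun_expand hOKν2 hz
    have ED : ∀ z ∈ ball (0:ℂ) 1, Dn z = δ 0 + z * Sfun δ1 z := by
      intro z hz
      rw [hDdef]
      exact Sfun_expand hOKδ hz
    have ED2 : ∀ z ∈ ball (0:ℂ) 1, Sfun δ1 z = δ 1 + z * Sfun δ2 z := by
      intro z hz
      exact Sfun_expand hOKδ1 hz
    have hg1z : ∀ z ∈ ball (0:ℂ) 1, z ≠ 0 → g1 z = g1 0 + z * G2 z := by
      intro z _ hz0
      rw [hG2def, dslope0 _ hz0]
      field_simp
      ring
    have hG2z : ∀ z ∈ ball (0:ℂ) 1, z ≠ 0 → G2 z = G2 0 + z * G3 z := by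
      intro z _ hz0
      rw [hG3def, dslope0 _ hz0]
      field_simp
      ring
    -- identity I1
    have I1 : ∀ z ∈ ball (0:ℂ) 1, Sfun ν1 z = Dn z * g1 z := by
      have I1ne : ∀ z ∈ ball (0:ℂ) 1, z ≠ 0 → Sfun ν1 z = Dn z * g1 z := by
        intro z hz hz0
        apply mul_left_cancel₀ hz0
        calc z * Sfun ν1 z = P z := (EP z hz).symm
          _ = Dn z * ω z := hPD z hz
          _ = Dn z * (z * g1 z) := by rw [hωg1 z hz]
          _ = z * (Dn z * g1 z) := by ring
      intro z hz
      rcases eq_or_ne z 0 with rfl | hz0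
      · exact ext0 (hOKν1.continuousAt h0m)
          ((contA _ (hOKδ.differentiableOn)).mul (contA g1 hdg1)) I1ne
      · exact I1ne z hz hz0
    have c1 : ν 1 = δ 0 * g1 0 := by
      have h := I1 0 h0m
      rwa [show Sfun ν1 0 = ν 1 from Sfun_zero, show Dn 0 = δ 0 by rw [hDdef]; exact Sfun_zero] at h
    -- identity I2
    have I2 : ∀ z ∈ ball (0:ℂ) 1, Sfun ν2 z = Dn z * G2 z + g1 0 * Sfun δ1 z := by
      have I2ne : ∀ z ∈ ball (0:ℂ) 1, z ≠ 0 → Sfun ν2 z = Dn z * G2 z + g1 0 * Sfun δ1 z := by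
        intro z hz hz0
        apply mul_left_cancel₀ hz0
        have h1 := EP2 z hz
        have h2 := I1 z hz
        have h3 := hg1z z hz hz0
        have h4 := ED z hz
        linear_combination -h1 + h2 + Dn z * h3 + g1 0 * h4 - c1
      intro z hz
      rcases eq_or_ne z 0 with rfl | hz0
      · refine ext0 (hOKν2.continuousAt h0m) ?_ I2ne
        exact ((contA _ (hOKδ.differentiableOn)).mul (contA G2 hdG2)).add
          ((continuousAt_const).mul (hOKδ1.continuousAt h0m))
      · exact I2ne z hz hz0
    have c2 : ν 2 = δ 0 * G2 0 + g1 0 * δ 1 := by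
      have h := I2 0 h0m
      rwa [show Sfun ν2 0 = ν 2 from Sfun_zero, show Dn 0 = δ 0 by rw [hDdef]; exact Sfun_zero,
        show Sfun δ1 0 = δ 1 from Sfun_zero] at h
    -- identity I3
    have I3 : ∀ z ∈ ball (0:ℂ) 1, Sfun ν3 z
        = Dn z * G3 z + G2 0 * Sfun δ1 z + g1 0 * Sfun δ2 z := by
      have I3ne : ∀ z ∈ ball (0:ℂ) 1, z ≠ 0 → Sfun ν3 z
          = Dn z * G3 z + G2 0 * Sfun δ1 z + g1 0 * Sfun δ2 z := by
        intro z hz hz0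
        apply mul_left_cancel₀ hz0
        have h1 := EP3 z hz
        have h2 := I2 z hz
        have h3 := hG2z z hz hz0
        have h4 := ED z hz
        have h5 := ED2 z hz
        linear_combination -h1 + h2 + Dn z * h3 + G2 0 * h4 + g1 0 * h5 - c2
      intro z hz
      rcases eq_or_ne z 0 with rfl | hz0
      · refine ext0 (hOKν3.continuousAt h0m) ?_ I3ne
        exact (((contA _ (hOKδ.differentiableOn)).mul (contA G3 hdG3)).add
          ((continuousAt_const).mul (hOKδ1.continuousAt h0m))).add
          ((continuousAt_const).mul (hOKδ2.continuousAt h0m))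
      · exact I3ne z hz hz0
    have c3 : ν 3 = δ 0 * G3 0 + G2 0 * δ 1 + g1 0 * δ 2 := by
      have h := I3 0 h0m
      rwa [show Sfun ν3 0 = ν 3 from Sfun_zero, show Dn 0 = δ 0 by rw [hDdef]; exact Sfun_zero,
        show Sfun δ1 0 = δ 1 from Sfun_zero, show Sfun δ2 0 = δ 2 from Sfun_zero] at h
    -- numeric coefficient relations
    set w1 : ℂ := g1 0 with hw1def
    set w2 : ℂ := G2 0 with hw2def
    set w3 : ℂ := G3 0 with hw3def
    have hν1v : ν 1 = a 2 := by simp only [hνdef]; push_cast; ring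
    have hν2v : ν 2 = 2 * a 3 := by simp only [hνdef]; push_cast; ring
    have hν3v : ν 3 = 3 * a 4 := by simp only [hνdef]; push_cast; ring
    have hδ0v : δ 0 = 2 - 2*A := by simp only [hδdef, ha1]; push_cast; ring
    have hδ1v : δ 1 = (3 - 2*A) * a 2 := by simp only [hδdef]; push_cast; ring
    have hδ2v : δ 2 = (4 - 2*A) * a 3 := by simp only [hδdef]; push_cast; ring
    rw [hν1v, hδ0v] at c1
    rw [hν2v, hδ0v, hδ1v] at c2
    rw [hν3v, hδ0v, hδ1v, hδ2v] at c3
    have ea2 : a 2 = (2 - 2*A) * w1 := c1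
    have ea3 : a 3 = (1 - A) * w2 + (3 - 2*A)*(1 - A)*w1^2 := by
      linear_combination c2 / 2 + ((3 - 2*A) * w1 / 2) * ea2
    have ea4 : a 4 = (2/3)*(1-A)*w3 + ((1-A)*(10-6*A)/3)*w1*w2
        + ((4-2*A)*(3-2*A)*(1-A)/3)*w1^3 := by
      linear_combination c3 / 3 + ((3 - 2*A) * w2 / 3) * ea2 + ((4 - 2*A) * w1 / 3) * ea3
    have KEY : a 2 * a 4 - a 3 ^ 2
        = (1-A)^2 * (4*w1*w3 + 2*w1^2*w2 - 3*w2^2 + (1 - 4*(1-A)^2)*w1^4) / 3 := by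
      rw [ea2, ea3, ea4]; ring
    -- final numeric estimates
    have hw1n : ‖w1‖ ≤ 1 := hb1 0 h0m
    clear_value w1 w2 w3 A
    clear I1 I2 I3 EP EP2 EP3 ED ED2 hg1z hG2z hωg1 hPD hb1 hdg1 hdG2 hdG3 contA
    clear hOKν1 hOKν2 hOKν3 hOKδ1 hOKδ2 hDne hDval hωb hdω hω0 hD0 h2A h2Ane
    clear hfz hderiv hfne hUne hkey hf hstar c1 c2 c3 ea2 ea3 ea4
    clear hν1v hν2v hν3v hδ0v hδ1v hδ2v
    clear hν3def hν2def hν1def hδ2def hδ1def hδdef hνdef hbdef hDdef hPdef hUdef hωdef hg1def hG2def hG3def hw1def hw2def hw3def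
    clear G3 G2 g1 ω ν3 ν2 ν1 δ2 δ1 Dn δ P ν U b hOKa hOKb hOKν hOKδ ha0 ha1 hP0 hU0
    have hβ1 : (0:ℝ) < 1 - α := by linarith
    have hβ4 : 1 - α ≤ 1/4 := by linarith
    have h1A : (1:ℂ) - A = ((1 - α : ℝ) : ℂ) := by rw [hAdef]; push_cast; ring
    have h1An : ‖(1:ℂ) - A‖ = 1 - α := by
      rw [h1A, Complex.norm_real, Real.norm_eq_abs, _root_.abs_of_pos hβ1]
    have hcoefc : (1:ℂ) - 4*(1-A)^2 = (((1 - 4*(1-α)^2 : ℝ)) : ℂ) := by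
      rw [hAdef]; push_cast; ring
    have hcoefnn : (0:ℝ) ≤ 1 - 4*(1-α)^2 := by nlinarith
    have hcoefn : ‖(1:ℂ) - 4*(1-A)^2‖ = 1 - 4*(1-α)^2 := by
      rw [hcoefc, Complex.norm_real, Real.norm_eq_abs, _root_.abs_of_nonneg hcoefnn]
    set X : ℂ := 4*w1*w3 + 2*w1^2*w2 - 3*w2^2 + (1 - 4*(1-A)^2)*w1^4 with hXdef
    have hXbound : ‖X‖ ≤ 4*‖w1‖*‖w3‖ + 2*‖w1‖^2*‖w2‖ + 3*‖w2‖^2 + (1-4*(1-α)^2)*‖w1‖^4 := by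
      rw [hXdef]
      calc ‖4*w1*w3 + 2*w1^2*w2 - 3*w2^2 + (1 - 4*(1-A)^2)*w1^4‖
          ≤ ‖4*w1*w3 + 2*w1^2*w2 - 3*w2^2‖ + ‖(1 - 4*(1-A)^2)*w1^4‖ := norm_add_le _ _
        _ ≤ ‖4*w1*w3 + 2*w1^2*w2‖ + ‖3*w2^2‖ + ‖(1 - 4*(1-A)^2)*w1^4‖ :=
            by have := norm_sub_le (4*w1*w3 + 2*w1^2*w2) (3*w2^2); linarith
        _ ≤ ‖4*w1*w3‖ + ‖2*w1^2*w2‖ + ‖3*w2^2‖ + ‖(1 - 4*(1-A)^2)*w1^4‖ :=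
            by have := norm_add_le (4*w1*w3) (2*w1^2*w2); linarith
        _ = 4*‖w1‖*‖w3‖ + 2*‖w1‖^2*‖w2‖ + 3*‖w2‖^2 + (1-4*(1-α)^2)*‖w1‖^4 := by
            rw [norm_mul, norm_mul, norm_mul, norm_mul, norm_mul, norm_mul,
              norm_pow, norm_pow, norm_pow, hcoefn]
            norm_num
    have hτnn : (0:ℝ) ≤ 1 - ‖w1‖^2 := by nlinarith [norm_nonneg w1]
    have hS3' : (1-‖w1‖^2) * ‖w3‖ ≤ (1-‖w1‖^2)^2 - ‖w2‖^2 + ‖w1‖*‖w2‖^2 := by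
      have h0' : ((1-‖w1‖^2 : ℝ):ℂ) * w3
          = (((1-‖w1‖^2:ℝ):ℂ)*w3 + (starRingEnd ℂ) w1 * w2^2) - (starRingEnd ℂ) w1 * w2^2 := by
        ring
      have h1' : ‖((1-‖w1‖^2:ℝ):ℂ)*w3‖
          ≤ ‖((1-‖w1‖^2:ℝ):ℂ)*w3 + (starRingEnd ℂ) w1 * w2^2‖ + ‖(starRingEnd ℂ) w1 * w2^2‖ := by
        have hns := norm_sub_le (((1-‖w1‖^2:ℝ):ℂ)*w3 + (starRingEnd ℂ) w1 * w2^2)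
          ((starRingEnd ℂ) w1 * w2^2)
        have heq2 : (((1-‖w1‖^2:ℝ):ℂ)*w3 + (starRingEnd ℂ) w1 * w2^2) - (starRingEnd ℂ) w1 * w2^2
            = ((1-‖w1‖^2:ℝ):ℂ)*w3 := by ring
        rwa [heq2] at hns
      have h2' : ‖((1-‖w1‖^2:ℝ):ℂ)*w3‖ = (1-‖w1‖^2)*‖w3‖ := by
        rw [norm_mul, Complex.norm_real, Real.norm_eq_abs, _root_.abs_of_nonneg hτnn]
      have h3' : ‖(starRingEnd ℂ) w1 * w2^2‖ = ‖w1‖*‖w2‖^2 := by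
        rw [norm_mul, norm_pow, RCLike.norm_conj]
      rw [h2', h3'] at h1'
      linarith [h1', S3]
    have hT : 4*‖w1‖*‖w3‖ + 2*‖w1‖^2*‖w2‖ + 3*‖w2‖^2 + (1-4*(1-α)^2)*‖w1‖^4
        ≤ (13 - 16*(1-α)^2)/4 := by
      rcases eq_or_lt_of_le hw1n with hx1 | hx1
      · obtain ⟨hw20, hw30⟩ := Sdeg hx1
        rw [hw20, hw30, hx1]
        simp only [norm_zero]
        nlinarith
      · set x : ℝ := ‖w1‖ with hxdef
        set y : ℝ := ‖w2‖ with hydef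
        set s : ℝ := ‖w3‖ with hsdef
        have hx0 : 0 ≤ x := norm_nonneg w1
        have hy0 : 0 ≤ y := norm_nonneg w2
        have hs0 : 0 ≤ s := norm_nonneg w3
        have hτpos : (0:ℝ) < 1 - x^2 := by nlinarith
        have hid : (1-x^2)*((13-16*(1-α)^2)/4*4
              - 4*(4*x*s + 2*x^2*y + 3*y^2 + (1-4*(1-α)^2)*x^4))
            = 16*x*((1-x^2)^2 - y^2 + x*y^2 - (1-x^2)*s)
              + (1-x^2)*(1 - 16*(1-α)^2 + (8+16*(1-α)^2)*x^4)
              + ((1-x^2) - y)*(8*x^2*(1-x^2) + 4*(1-x)*(3-x)*(y+(1-x^2))) := by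
          ring
        have t1 : (0:ℝ) ≤ 16*x*((1-x^2)^2 - y^2 + x*y^2 - (1-x^2)*s) := by
          apply mul_nonneg (by positivity)
          linarith [hS3']
        have t2 : (0:ℝ) ≤ (1-x^2)*(1 - 16*(1-α)^2 + (8+16*(1-α)^2)*x^4) := by
          apply mul_nonneg hτpos.le
          nlinarith [pow_nonneg hx0 4]
        have t3 : (0:ℝ) ≤ ((1-x^2) - y)*(8*x^2*(1-x^2) + 4*(1-x)*(3-x)*(y+(1-x^2))) := by
          apply mul_nonneg (by linarith [S2])
          have ha' : (0:ℝ) ≤ 8*x^2*(1-x^2) := mul_nonneg (by positivity) hτpos.le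
          have hb' : (0:ℝ) ≤ 4*(1-x)*(3-x)*(y+(1-x^2)) :=
            mul_nonneg (mul_nonneg (mul_nonneg (by norm_num) (by linarith)) (by linarith))
              (by linarith)
          linarith
        have h5 : (0:ℝ) ≤ (1-x^2)*((13-16*(1-α)^2)/4*4
            - 4*(4*x*s + 2*x^2*y + 3*y^2 + (1-4*(1-α)^2)*x^4)) := by
          rw [hid]; linarith
        have h6 : (0:ℝ) ≤ (13-16*(1-α)^2)/4*4
            - 4*(4*x*s + 2*x^2*y + 3*y^2 + (1-4*(1-α)^2)*x^4) := by
          set K : ℝ := (13-16*(1-α)^2)/4*4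
            - 4*(4*x*s + 2*x^2*y + 3*y^2 + (1-4*(1-α)^2)*x^4) with hKdef
          have hKeq : K = ((1-x^2)*K)/(1-x^2) := (mul_div_cancel_left₀ _ hτpos.ne').symm
          rw [hKeq]
          exact div_nonneg h5 hτpos.le
        linarith
    rw [KEY]
    have h3n : ‖(3:ℂ)‖ = 3 := by norm_num
    rw [norm_div, norm_mul, norm_pow, h1An, h3n]
    have hXT : ‖X‖ ≤ (13 - 16*(1-α)^2)/4 := hXbound.trans hT
    calc (1-α)^2 * ‖X‖ / 3 ≤ (1-α)^2 * ((13 - 16*(1-α)^2)/4) / 3 := by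
          gcongr
      _ = (1-α)^2 * (13 - 16*(1-α)^2)/12 := by ring
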